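/- The 8×8 complex matrix U = (1/√2)(S₀⊗I₂⊗I₂ + S₁⊗σ₃⊗σ₃ + S₂⊗σ₁⊗σ₁ + S₃⊗σ₂⊗σ₂) is unitary and has Schmidt rank exactly 4. -/

import Mathlib

open Matrix Kronecker Complex

/-- The tripartite Schmidt rank of an 8×8 complex matrix, viewed as a matrix on
ℂ² ⊗ ℂ² ⊗ ℂ² via Kronecker products: the least `r` such that
`U = ∑ j, A j ⊗ₖ (B j ⊗ₖ C j)` with 2×2 matrices `A j`, `B j`, `C j`. -/
noncomputable def sr (U : Matrix (Fin 2 × Fin 2 × Fin 2) (Fin 2 × Fin 2 × Fin 2) ℂ) : ℕ :=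
  sInf {r | ∃ A B C : Fin r → Matrix (Fin 2) (Fin 2) ℂ,
    U = ∑ j, A j ⊗ₖ (B j ⊗ₖ C j)}

def S0 : Matrix (Fin 2) (Fin 2) ℂ := !![1, 0; 0, 0]
def S1 : Matrix (Fin 2) (Fin 2) ℂ := !![0, 1; 0, 0]
def S2 : Matrix (Fin 2) (Fin 2) ℂ := !![0, 0; 1, 0]
def S3 : Matrix (Fin 2) (Fin 2) ℂ := !![0, 0; 0, 1]
def σ1 : Matrix (Fin 2) (Fin 2) ℂ := !![0, 1; 1, 0]
def σ2 : Matrix (Fin 2) (Fin 2) ℂ := !![0, -I; I, 0]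
def σ3 : Matrix (Fin 2) (Fin 2) ℂ := !![1, 0; 0, -1]
def I2 : Matrix (Fin 2) (Fin 2) ℂ := 1

noncomputable def Ufin : Matrix (Fin 2 × Fin 2 × Fin 2) (Fin 2 × Fin 2 × Fin 2) ℂ :=
  (Real.sqrt 2 : ℂ)⁻¹ • (S0 ⊗ₖ (I2 ⊗ₖ I2) + S1 ⊗ₖ (σ3 ⊗ₖ σ3) +
    S2 ⊗ₖ (σ1 ⊗ₖ σ1) + S3 ⊗ₖ (σ2 ⊗ₖ σ2))

/-! ### Auxiliary definitions and lemmas -/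

noncomputable def Mbig : Matrix (Fin 2 × Fin 2 × Fin 2) (Fin 2 × Fin 2 × Fin 2) ℂ :=
  S0 ⊗ₖ (I2 ⊗ₖ I2) + S1 ⊗ₖ (σ3 ⊗ₖ σ3) + S2 ⊗ₖ (σ1 ⊗ₖ σ1) + S3 ⊗ₖ (σ2 ⊗ₖ σ2)

set_option maxHeartbeats 2000000 in
lemma MbigMH : Mbig * Mbigᴴ = (2:ℂ) • 1 := by
  ext ⟨a,b,c⟩ ⟨d,e,f⟩
  fin_cases a <;> fin_cases b <;> fin_cases c <;> fin_cases d <;> fin_cases e <;> fin_cases f <;>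
    simp [Mbig, Matrix.mul_apply, Fintype.sum_prod_type, Fin.sum_univ_two, S0, S1, S2, S3, σ1, σ2, σ3, I2,
      Matrix.one_apply, Matrix.smul_apply, Matrix.add_apply, Matrix.kroneckerMap_apply,
      Matrix.conjTranspose_apply, Prod.ext_iff] <;> norm_num

lemma sqrt2_ne : ((Real.sqrt 2 : ℝ) : ℂ)⁻¹ ≠ 0 := by
  simp [Real.sqrt_eq_zero']

lemma Ufin_unitary : Ufin ∈ Matrix.unitaryGroup (Fin 2 × Fin 2 × Fin 2) ℂ := by
  rw [Matrix.mem_unitaryGroup_iff]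
  show Ufin * Ufinᴴ = 1
  have : Ufin = (Real.sqrt 2 : ℂ)⁻¹ • Mbig := rfl
  rw [this, Matrix.conjTranspose_smul, Matrix.smul_mul, Matrix.mul_smul, MbigMH,
    smul_smul, smul_smul]
  have h1 : star ((Real.sqrt 2 : ℂ)⁻¹) = (Real.sqrt 2 : ℂ)⁻¹ := by
    simp [Complex.conj_ofReal]
  rw [h1]
  have h2 : ((Real.sqrt 2 : ℝ) : ℂ)⁻¹ * ((Real.sqrt 2 : ℝ) : ℂ)⁻¹ * 2 = 1 := by
    have hs : ((Real.sqrt 2 : ℝ) : ℂ) * ((Real.sqrt 2 : ℝ) : ℂ) = 2 := by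
      norm_cast
      rw [Real.mul_self_sqrt]; norm_num
    field_simp
    exact hs.symm.trans (sq _).symm
  rw [h2, one_smul]

noncomputable def Af : Fin 4 → Matrix (Fin 2) (Fin 2) ℂ :=
  ![(Real.sqrt 2 : ℂ)⁻¹ • S0, (Real.sqrt 2 : ℂ)⁻¹ • S1,
    (Real.sqrt 2 : ℂ)⁻¹ • S2, (Real.sqrt 2 : ℂ)⁻¹ • S3]
def Bf : Fin 4 → Matrix (Fin 2) (Fin 2) ℂ := ![I2, σ3, σ1, σ2]

lemma Ufin_eq : Ufin = ∑ j, Af j ⊗ₖ (Bf j ⊗ₖ Bf j) := by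
  rw [Fin.sum_univ_four]
  simp only [Af, Bf, Matrix.cons_val_zero, Matrix.cons_val_one, Matrix.head_cons,
    Matrix.cons_val_two, Matrix.tail_cons, Matrix.cons_val_three, Matrix.smul_kronecker]
  rw [Ufin]
  module

lemma sr_lower (r : ℕ) (A B C : Fin r → Matrix (Fin 2) (Fin 2) ℂ)
    (hU : Ufin = ∑ j, A j ⊗ₖ (B j ⊗ₖ C j)) : 4 ≤ r := by
  classical
  set gen : Fin r → Matrix (Fin 2 × Fin 2) (Fin 2 × Fin 2) ℂ := fun j => B j ⊗ₖ C j with hgen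
  set W : Submodule ℂ (Matrix (Fin 2 × Fin 2) (Fin 2 × Fin 2) ℂ) :=
    Submodule.span ℂ (Set.range gen) with hW
  set blk : Fin 2 → Fin 2 → Matrix (Fin 2 × Fin 2) (Fin 2 × Fin 2) ℂ :=
    fun a b => Matrix.of fun p q => Ufin (a, p) (b, q) with hblk
  have hmem : ∀ a b, blk a b ∈ W := by
    intro a b
    have : blk a b = ∑ j, A j a b • gen j := by
      ext p q
      simp [hblk, hU, Matrix.sum_apply, Matrix.kroneckerMap_apply, hgen]
    rw [this]
    exact Submodule.sum_mem _ fun j _ =>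
      Submodule.smul_mem _ _ (Submodule.subset_span ⟨j, rfl⟩)
  set v : Fin 4 → Matrix (Fin 2 × Fin 2) (Fin 2 × Fin 2) ℂ :=
    ![blk 0 0, blk 0 1, blk 1 0, blk 1 1] with hv
  have hli : LinearIndependent ℂ v := by
    rw [Fintype.linearIndependent_iff]
    intro g hg
    rw [Fin.sum_univ_four] at hg
    simp only [hv, Matrix.cons_val_zero, Matrix.cons_val_one, Matrix.head_cons,
      Matrix.cons_val_two, Matrix.tail_cons, Matrix.cons_val_three] at hg
    have e1 := congrFun (congrFun hg ((0,0))) ((0,0))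
    have e2 := congrFun (congrFun hg ((0,1))) ((0,1))
    have e3 := congrFun (congrFun hg ((0,0))) ((1,1))
    have e4 := congrFun (congrFun hg ((0,1))) ((1,0))
    simp only [hblk, Ufin, S0, S1, S2, S3, σ1, σ2, σ3, I2, Matrix.add_apply, Matrix.smul_apply,
      Matrix.kroneckerMap_apply, Matrix.one_apply, Matrix.of_apply, Matrix.cons_val_zero,
      Matrix.cons_val_one, Matrix.head_cons, Matrix.head_fin_const, Matrix.zero_apply,
      Prod.ext_iff] at e1 e2 e3 e4
    norm_num at e1 e2 e3 e4
    have h0 : g 0 * ((Real.sqrt 2 : ℝ) : ℂ)⁻¹ = 0 := by linear_combination (e1 + e2) / 2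
    have h1 : g 1 * ((Real.sqrt 2 : ℝ) : ℂ)⁻¹ = 0 := by linear_combination (e1 - e2) / 2
    have h2 : g 2 * ((Real.sqrt 2 : ℝ) : ℂ)⁻¹ = 0 := by linear_combination (e3 + e4) / 2
    have h3 : g 3 * ((Real.sqrt 2 : ℝ) : ℂ)⁻¹ = 0 := by linear_combination (e4 - e3) / 2
    intro i
    fin_cases i
    · exact (mul_eq_zero.mp h0).resolve_right sqrt2_ne
    · exact (mul_eq_zero.mp h1).resolve_right sqrt2_ne
    · exact (mul_eq_zero.mp h2).resolve_right sqrt2_ne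
    · exact (mul_eq_zero.mp h3).resolve_right sqrt2_ne
  have hspan : Submodule.span ℂ (Set.range v) ≤ W := by
    rw [Submodule.span_le]
    rintro x ⟨i, rfl⟩
    fin_cases i <;> simp only [hv, Matrix.cons_val_zero, Matrix.cons_val_one, Matrix.head_cons,
      Matrix.cons_val_two, Matrix.tail_cons, Matrix.cons_val_three] <;> exact hmem _ _
  have h4 : (4 : ℕ) = Module.finrank ℂ (Submodule.span ℂ (Set.range v)) := by
    rw [finrank_span_eq_card hli, Fintype.card_fin]
  have hle1 : Module.finrank ℂ (Submodule.span ℂ (Set.range v)) ≤ Module.finrank ℂ W :=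
    Submodule.finrank_mono hspan
  have hle2 : Module.finrank ℂ W ≤ r := by
    refine (finrank_span_le_card (Set.range gen)).trans ?_
    rw [Set.toFinset_card]
    exact (Fintype.card_range_le gen).trans (by simp)
  omega

theorem stmt7 : Ufin ∈ Matrix.unitaryGroup (Fin 2 × Fin 2 × Fin 2) ℂ ∧ sr Ufin = 4 := by
  refine ⟨Ufin_unitary, le_antisymm (Nat.sInf_le ⟨Af, Bf, Bf, Ufin_eq⟩) ?_⟩
  refine le_csInf ⟨4, Af, Bf, Bf, Ufin_eq⟩ ?_
  rintro r ⟨A, B, C, hU⟩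
  exact sr_lower r A B C hU
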